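/- Let m ≥ 1. The map ϑ_m : dk_{m,n} → dk_{m−1,n+1} sends the ideal [c,c] into the corresponding ideal of dk_{m−1,n+1} and hence induces a Lie algebra homomorphism ϑ_m : edk_{m,n} → edk_{m−1,n+1}. For u ∈ lie_m and 1 ≤ i ≤ n: ϑ_m(u_i) = (u(x_1,…,x_{m−1},0))_{i+1} + ((∂_m u)(x_1,…,x_{m−1},0))_{1(i+1)}, where g(x_1,…,x_{m−1},0) denotes the image of g ∈ ass_m under the algebra homomorphism ass_m → ass_{m−1} with x_p ↦ x_p for p < m and x_m ↦ 0. For w ∈ ass_m and 1 ≤ i < j ≤ n: ϑ_m(w_{ij}) = (w(x_1,…,x_{m−1},0))_{(i+1)(j+1)}. -/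

import Mathlib

noncomputable section

open scoped TensorProduct

attribute [local instance 100] LieRing.ofAssociativeRing

/-- The free unital associative algebra over `ℚ` on `N` generators. -/
abbrev Ass (N : ℕ) : Type := FreeAlgebra ℚ (Fin N)

/-- The `i`-th generator `x_i`. -/
def gen {N : ℕ} (i : Fin N) : Ass N := FreeAlgebra.ι ℚ i

/-- The monomial (word) associated to a list of generator indices. -/
def wordProd {N : ℕ} (l : List (Fin N)) : Ass N := (l.map gen).prod

/-- Extend a function on words (monomials) to a `ℚ`-linear map on the free algebra,
using the monomial basis. -/
def liftWord {N : ℕ} {A : Type} [AddCommGroup A] [Module ℚ A]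
    (f : List (Fin N) → A) : Ass N →ₗ[ℚ] A :=
  (FreeAlgebra.basisFreeMonoid ℚ (Fin N)).constr ℚ fun w => f w.toList

/-- `μ_gr` on a word. -/
def muWord {N : ℕ} : List (Fin N) → Ass N
  | [] => 0
  | [_] => 0
  | a :: b :: t => (if a = b then -(wordProd (a :: t)) else 0) + gen a * muWord (b :: t)

/-- The linearized self-intersection operation `μ_gr`. -/
def muGr (N : ℕ) : Ass N →ₗ[ℚ] Ass N := liftWord muWord

/-- The antipode: the anti-automorphism `ι` with `ι(x_i) = -x_i`, as a linear map. -/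
def iotaMap (N : ℕ) : Ass N →ₗ[ℚ] Ass N :=
  liftWord fun l => ((-1 : ℚ) ^ l.length) • wordProd l.reverse

/-- The (right) partial derivative `∂_i`, characterized on `lie_N` by
`a = Σ_i (∂_i a) x_i`. -/
def partialD {N : ℕ} (i : Fin N) : Ass N →ₗ[ℚ] Ass N :=
  liftWord fun l =>
    match l.getLast? with
    | some a => if a = i then wordProd l.dropLast else 0
    | none => 0

/-- `η_gr` on a pair of words. -/
def etaWord {N : ℕ} (l r : List (Fin N)) : Ass N :=
  match l.getLast?, r with
  | some a, b :: t => if a = b then -(wordProd (l.dropLast ++ a :: t)) else 0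
  | _, _ => 0

/-- The linearized homotopy intersection form `η_gr`. -/
def etaGr (N : ℕ) : Ass N →ₗ[ℚ] Ass N →ₗ[ℚ] Ass N :=
  liftWord fun l => liftWord fun r => etaWord l r

/-- Degree-`k` homogeneous part of a free algebra (word-length grading). -/
def homogS (X : Type) (k : ℕ) : Submodule ℚ (FreeAlgebra ℚ X) :=
  Submodule.span ℚ {z | ∃ l : List X, l.length = k ∧ z = (l.map (FreeAlgebra.ι ℚ)).prod}

/-- The projection onto the degree-`k` homogeneous component. -/
def homogComp {N : ℕ} (k : ℕ) : Ass N →ₗ[ℚ] Ass N :=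
  liftWord fun l => if l.length = k then wordProd l else 0

/-- The free Lie algebra on `x_1, …, x_N`, as the Lie subalgebra of `Ass N`
(with the commutator bracket) generated by the generators. -/
def lieN (N : ℕ) : LieSubalgebra ℚ (Ass N) :=
  LieSubalgebra.lieSpan ℚ (Ass N) (Set.range (gen (N := N)))

/-- The generator `x_i` as an element of `lie_N`. -/
def genL (N : ℕ) (i : Fin N) : lieN N :=
  ⟨gen i, LieSubalgebra.subset_lieSpan ⟨i, rfl⟩⟩

/-- Substitution: the algebra endomorphism of `ass_2` with `x ↦ p`, `y ↦ q`. -/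
def sub2 (p q : Ass 2) : Ass 2 →ₐ[ℚ] Ass 2 := FreeAlgebra.lift ℚ ![p, q]

/-- `x`. -/
def xA : Ass 2 := gen 0
/-- `y`. -/
def yA : Ass 2 := gen 1

/-- Equation (E1): `φ(y,0) − φ(x+y,0) = 0`. -/
def E1 (φ : Ass 2) : Prop := sub2 yA 0 φ - sub2 (xA + yA) 0 φ = 0

/-- Equation (E2): `(∂_y φ) + (∂_y φ)(y,0) − (∂_y φ)(x+y,0) − R(φ) = 0`,
where `R` is the restriction of `μ_gr` to `lie_2`. -/
def E2 (φ : Ass 2) : Prop :=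
  partialD 1 φ + sub2 yA 0 (partialD 1 φ) - sub2 (xA + yA) 0 (partialD 1 φ) - muGr 2 φ = 0

/-- Equation (E3): `[x, φ(y,x)] + [y, φ(x,y)] = 0`. -/
def E3 (φ : Ass 2) : Prop := ⁅xA, sub2 yA xA φ⁆ + ⁅yA, φ⁆ = 0

/-- `ν^em(φ) = (φ(y,x), φ(x,y))`. -/
def nuEm (φ : Ass 2) : Fin 2 → Ass 2 := ![sub2 yA xA φ, φ]

/-- The space `grt_1^em` of solutions to the linearized emergent equations. -/
def grt1em : Set (Ass 2) := {φ | φ ∈ lieN 2 ∧ E1 φ ∧ E2 φ ∧ E3 φ}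

/-- The derivation `ρ(ũ)` on a word. -/
def rhoWord {N : ℕ} (u : Fin N → Ass N) : List (Fin N) → Ass N
  | [] => 0
  | a :: t => ⁅gen a, u a⁆ * wordProd t + gen a * rhoWord u t

/-- The tangential derivation `ρ(ũ)`, determined by `ρ(ũ)(x_i) = [x_i, u_i]`. -/
def rho {N : ℕ} (u : Fin N → Ass N) : Ass N →ₗ[ℚ] Ass N := liftWord (rhoWord u)

/-- The span of commutators in `ass_N`. -/
def trRel (N : ℕ) : Submodule ℚ (Ass N) :=
  Submodule.span ℚ {z | ∃ a b : Ass N, z = a * b - b * a}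

/-- The trace space `tr_N = ass_N/[ass_N, ass_N]`. -/
abbrev Tr (N : ℕ) : Type := Ass N ⧸ trRel N

/-- The projection `|·| : ass_N → tr_N`. -/
def trM (N : ℕ) : Ass N →ₗ[ℚ] Tr N := (trRel N).mkQ

/-- The divergence `div(ũ) = Σ_i |x_i (∂_i u_i)|`. -/
def divergence {N : ℕ} (u : Fin N → Ass N) : Tr N :=
  ∑ i, trM N (gen i * partialD i (u i))

/-- `ũ ∈ tder_N`: all components lie in `lie_N`. -/
def IsTDer {N : ℕ} (u : Fin N → Ass N) : Prop := ∀ i, u i ∈ lieN N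

/-- `ũ ∈ sder_N`. -/
def IsSDer {N : ℕ} (u : Fin N → Ass N) : Prop := IsTDer u ∧ rho u (∑ i, gen i) = 0

/-- `ũ ∈ krv_N`. -/
def IsKRV {N : ℕ} (u : Fin N → Ass N) : Prop :=
  IsSDer u ∧ ∃ f : Fin (N + 1) → Polynomial ℚ,
    divergence u =
      trM N (Polynomial.aeval (∑ i, gen i) (f 0)) +
        ∑ i : Fin N, trM N (Polynomial.aeval (gen i) (f i.succ))

/-- `ũ ∈ krv_N^0`. -/
def IsKRV0 {N : ℕ} (u : Fin N → Ass N) : Prop :=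
  IsSDer u ∧ ∃ cf : Fin N → ℚ, divergence u = ∑ i, cf i • trM N (gen i)

/-- The swap `u(x,y) ↦ u(y,x)`. -/
def swapA : Ass 2 →ₐ[ℚ] Ass 2 := sub2 yA xA

/-- `ũ ∈ krv_2^sym`. -/
def IsKRVsym (u : Fin 2 → Ass 2) : Prop := IsKRV u ∧ u 1 = swapA (u 0)


/-- The coproduct `Δ` on `ass_N`, with `Δ(x_i) = x_i ⊗ 1 + 1 ⊗ x_i`. -/
def comulA (N : ℕ) : Ass N →ₐ[ℚ] (Ass N ⊗[ℚ] Ass N) :=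
  FreeAlgebra.lift ℚ fun i => gen i ⊗ₜ[ℚ] (1 : Ass N) + (1 : Ass N) ⊗ₜ[ℚ] gen i

/-- `μ_{r,gr} = ((|·|∘mult) ⊗ id) ∘ (id ⊗ ((ι ⊗ id) ∘ Δ)) ∘ (id ⊗ μ_gr) ∘ Δ`. -/
def muR (N : ℕ) : Ass N →ₗ[ℚ] Tr N ⊗[ℚ] Ass N :=
  (TensorProduct.map ((trM N).comp (LinearMap.mul' ℚ (Ass N))) LinearMap.id).comp <|
    ((TensorProduct.assoc ℚ (Ass N) (Ass N) (Ass N)).symm.toLinearMap).comp <|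
      (TensorProduct.map LinearMap.id
          ((TensorProduct.map (iotaMap N) LinearMap.id).comp (comulA N).toLinearMap)).comp <|
        (TensorProduct.map LinearMap.id (muGr N)).comp (comulA N).toLinearMap

/-- `Alt(a ⊗ b) = a ⊗ b - b ⊗ a`. -/
def altMap (N : ℕ) : Tr N ⊗[ℚ] Tr N →ₗ[ℚ] Tr N ⊗[ℚ] Tr N :=
  LinearMap.id - (TensorProduct.comm ℚ (Tr N) (Tr N)).toLinearMap

/-- The linearized Turaev cobracket `δ_gr = Alt ∘ (id ⊗ |·|) ∘ μ_{r,gr}`. -/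
def Dgr (N : ℕ) : Ass N →ₗ[ℚ] Tr N ⊗[ℚ] Tr N :=
  (altMap N).comp ((TensorProduct.map LinearMap.id (trM N)).comp (muR N))

/-- Index type of the generators `t_{pq}` (`p ≠ q`) of the Drinfeld–Kohno Lie algebra. -/
def dkGenIdx (N : ℕ) : Type := {pq : Fin N × Fin N // pq.1 ≠ pq.2}

abbrev FLdk (N : ℕ) := FreeLieAlgebra ℚ (dkGenIdx N)

def tFree {N : ℕ} (p q : Fin N) (h : p ≠ q) : FLdk N := FreeLieAlgebra.of ℚ ⟨(p, q), h⟩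

/-- The defining relations of `dk_N`: symmetry, commutation and 4T. -/
def dkRels (N : ℕ) : Set (FLdk N) :=
  {z | ∃ (p q : Fin N) (h : p ≠ q), z = tFree p q h - tFree q p h.symm} ∪
  {z | ∃ (p q r s : Fin N) (hpq : p ≠ q) (hrs : r ≠ s),
      p ≠ r ∧ p ≠ s ∧ q ≠ r ∧ q ≠ s ∧ z = ⁅tFree p q hpq, tFree r s hrs⁆} ∪
  {z | ∃ (p q r : Fin N) (hpq : p ≠ q) (hqr : q ≠ r) (hpr : p ≠ r),
      z = ⁅tFree p q hpq + tFree q r hqr, tFree p r hpr⁆}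

def dkIdeal (N : ℕ) : LieIdeal ℚ (FLdk N) := LieSubmodule.lieSpan ℚ (FLdk N) (dkRels N)

/-- The Drinfeld–Kohno Lie algebra `dk_N`. -/
abbrev dk (N : ℕ) := FLdk N ⧸ dkIdeal N

/-- The generator `t_{pq}` of `dk_N`. -/
def tGen {N : ℕ} (p q : Fin N) (h : p ≠ q) : dk N :=
  LieSubmodule.Quotient.mk (N := dkIdeal N) (tFree p q h)

/-- Index type of the generators of the mixed Drinfeld–Kohno Lie algebra `dk_{m,n}`:
pairs of distinct indices in `Fin (m+n)`, not both poles (i.e., not both `< m`). -/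
def MIdx (m n : ℕ) : Type :=
  {pq : Fin (m + n) × Fin (m + n) // pq.1 ≠ pq.2 ∧ (m ≤ (pq.1 : ℕ) ∨ m ≤ (pq.2 : ℕ))}

abbrev FLmix (m n : ℕ) := FreeLieAlgebra ℚ (MIdx m n)

def tMix {m n : ℕ} (p q : Fin (m + n)) (h : p ≠ q)
    (hm : m ≤ (p : ℕ) ∨ m ≤ (q : ℕ)) : FLmix m n :=
  FreeLieAlgebra.of ℚ ⟨(p, q), h, hm⟩

/-- The defining relations of `dk_{m,n}`: exactly the symmetry, commutation and 4T relations
of `dk_{m+n}` involving only mixed pairs. -/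
def mixRels (m n : ℕ) : Set (FLmix m n) :=
  {z | ∃ (p q : Fin (m + n)) (h : p ≠ q) (hm : m ≤ (p : ℕ) ∨ m ≤ (q : ℕ)),
      z = tMix p q h hm - tMix q p h.symm hm.symm} ∪
  {z | ∃ (p q r s : Fin (m + n)) (hpq : p ≠ q) (hmpq : m ≤ (p : ℕ) ∨ m ≤ (q : ℕ))
      (hrs : r ≠ s) (hmrs : m ≤ (r : ℕ) ∨ m ≤ (s : ℕ)),
      p ≠ r ∧ p ≠ s ∧ q ≠ r ∧ q ≠ s ∧ z = ⁅tMix p q hpq hmpq, tMix r s hrs hmrs⁆} ∪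
  {z | ∃ (p q r : Fin (m + n)) (hpq : p ≠ q) (hmpq : m ≤ (p : ℕ) ∨ m ≤ (q : ℕ))
      (hqr : q ≠ r) (hmqr : m ≤ (q : ℕ) ∨ m ≤ (r : ℕ))
      (hpr : p ≠ r) (hmpr : m ≤ (p : ℕ) ∨ m ≤ (r : ℕ)),
      z = ⁅tMix p q hpq hmpq + tMix q r hqr hmqr, tMix p r hpr hmpr⁆}

def mixIdeal (m n : ℕ) : LieIdeal ℚ (FLmix m n) :=
  LieSubmodule.lieSpan ℚ (FLmix m n) (mixRels m n)

/-- The mixed Drinfeld–Kohno Lie algebra `dk_{m,n}`. -/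
abbrev dkmn (m n : ℕ) := FLmix m n ⧸ mixIdeal m n

lemma castAdd_ne_natAdd {m n : ℕ} (i : Fin m) (j : Fin n) :
    Fin.castAdd n i ≠ Fin.natAdd m j := by
  intro h
  have hv := congrArg Fin.val h
  simp only [Fin.coe_castAdd, Fin.coe_natAdd] at hv
  have := i.isLt
  omega

lemma natAdd_ne {m n : ℕ} {u v : Fin n} (h : u ≠ v) :
    Fin.natAdd m u ≠ Fin.natAdd m v := by
  intro hh
  exact h (by
    have hv := congrArg Fin.val hh
    simp only [Fin.coe_natAdd] at hv
    exact Fin.ext (by omega))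

lemma natAdd_le_left (m : ℕ) {n : ℕ} (j : Fin n) : m ≤ (Fin.natAdd m j : ℕ) := by
  simp only [Fin.coe_natAdd]; omega

/-- The generator `a_{ij}` of `dk_{m,n}` (0-indexed): `a_{ij} = t_{i(m+j)}`. -/
def aG {m n : ℕ} (i : Fin m) (j : Fin n) : dkmn m n :=
  LieSubmodule.Quotient.mk (N := mixIdeal m n)
    (tMix (Fin.castAdd n i) (Fin.natAdd m j) (castAdd_ne_natAdd i j)
      (Or.inr (natAdd_le_left m j)))

/-- The generator `c_{ij}` of `dk_{m,n}` (0-indexed): `c_{ij} = t_{(m+i)(m+j)}`. -/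
def cG {m n : ℕ} (u v : Fin n) (h : u ≠ v) : dkmn m n :=
  LieSubmodule.Quotient.mk (N := mixIdeal m n)
    (tMix (Fin.natAdd m u) (Fin.natAdd m v) (natAdd_ne h)
      (Or.inl (natAdd_le_left m u)))

/-- The Lie ideal `c` of `dk_{m,n}` generated by the `c_{ij}`. -/
def cId (m n : ℕ) : LieIdeal ℚ (dkmn m n) :=
  LieSubmodule.lieSpan ℚ (dkmn m n) {z | ∃ (u v : Fin n) (h : u ≠ v), z = cG u v h}

/-- The Lie ideal `[c,c]`. -/
def ccId (m n : ℕ) : LieIdeal ℚ (dkmn m n) := ⁅cId m n, cId m n⁆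

/-- The emergent Drinfeld–Kohno Lie algebra `edk_{m,n} = dk_{m,n}/[c,c]`. -/
abbrev edk (m n : ℕ) := dkmn m n ⧸ ccId m n

/-- Projection `dk_{m,n} → edk_{m,n}` as a function. -/
def eprojF (m n : ℕ) : dkmn m n → edk m n := LieSubmodule.Quotient.mk (N := ccId m n)

/-- Projection `dk_{m,n} → edk_{m,n}` as a `ℚ`-linear map. -/
def eproj (m n : ℕ) : dkmn m n →ₗ[ℚ] edk m n := (ccId m n).toSubmodule.mkQ

/-- `a_{ij}` in `edk_{m,n}`. -/
def aGE {m n : ℕ} (i : Fin m) (j : Fin n) : edk m n := eprojF m n (aG i j)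

/-- `c_{ij}` in `edk_{m,n}`. -/
def cGE {m n : ℕ} (u v : Fin n) (h : u ≠ v) : edk m n := eprojF m n (cG u v h)

/-- The canonical Lie algebra map `FreeLieAlgebra ℚ (Fin m) → ass_m`,
whose image is `lie_m`. -/
def toAssL (m : ℕ) : FreeLieAlgebra ℚ (Fin m) →ₗ⁅ℚ⁆ FreeAlgebra ℚ (Fin m) :=
  FreeLieAlgebra.lift ℚ (FreeAlgebra.ι ℚ)

/-- `u ↦ u_i` (at `dk` level): the Lie algebra map with `x_p ↦ a_{pi}`. -/
def uEldk {m n : ℕ} (i : Fin n) : FreeLieAlgebra ℚ (Fin m) →ₗ⁅ℚ⁆ dkmn m n :=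
  FreeLieAlgebra.lift ℚ fun p => aG p i

/-- `u ↦ u_i`: the Lie algebra map `lie_m → edk_{m,n}` with `x_p ↦ a_{pi}`. -/
def uEl {m n : ℕ} (i : Fin n) : FreeLieAlgebra ℚ (Fin m) →ₗ⁅ℚ⁆ edk m n :=
  FreeLieAlgebra.lift ℚ fun p => aGE p i

/-- Iterated bracketing `[a_{p₁ j}, [a_{p₂ j}, [… , [a_{p_d j}, ξ]…]]]`. -/
def adWApply {m n : ℕ} (j : Fin n) : List (Fin m) → edk m n → edk m n
  | [], ξ => ξ
  | p :: t, ξ => ⁅aGE p j, adWApply j t ξ⁆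


/-- `w ↦ w_{uv}`: the linear map `ass_m → edk_{m,n}` with
`1 ↦ c_{uv}` and `(x_{p₁}⋯x_{p_d}) ↦ [a_{p₁ v}, [… [a_{p_d v}, c_{uv}]…]]`. -/
def wEl {m n : ℕ} (u v : Fin n) (h : u ≠ v) : Ass m →ₗ[ℚ] edk m n :=
  liftWord fun l => adWApply v l (cGE u v h)

/-- `ad_w^{(l)}(ξ)`, linear in `w`. -/
def adOp {m n : ℕ} (l : Fin n) (ξ : edk m n) : Ass m →ₗ[ℚ] edk m n :=
  liftWord fun lst => adWApply l lst ξ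

/-- Degree-`k` part of the free Lie algebra (generators of degree 1), realized as the
preimage of the degree-`k` part of the free associative algebra under the canonical map. -/
def flHomog (X : Type) (k : ℕ) : Submodule ℚ (FreeLieAlgebra ℚ X) :=
  Submodule.comap
    (FreeLieAlgebra.lift ℚ (FreeAlgebra.ι ℚ (X := X)) :
      FreeLieAlgebra ℚ X →ₗ⁅ℚ⁆ FreeAlgebra ℚ X).toLinearMap
    (homogS X k)

/-- Degree-`k` part of `edk_{m,n}`. -/
def edkHomog (m n : ℕ) (k : ℕ) : Submodule ℚ (edk m n) :=
  (((flHomog (MIdx m n) k).map (mixIdeal m n).toSubmodule.mkQ)).map (eproj m n)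

-- Fin helper lemmas
lemma castSucc_ne_of_ne {n : ℕ} {u v : Fin n} (h : u ≠ v) :
    Fin.castSucc u ≠ Fin.castSucc v := fun hh => h (Fin.castSucc_injective n hh)

lemma succ_ne_of_ne {n : ℕ} {u v : Fin n} (h : u ≠ v) :
    Fin.succ u ≠ Fin.succ v := fun hh => h (Fin.succ_injective n hh)

lemma castSucc_ne_last {n : ℕ} (u : Fin n) : Fin.castSucc u ≠ Fin.last n :=
  (Fin.castSucc_lt_last u).ne

lemma castSucc_ne_succ_of_le {n : ℕ} {u v : Fin n} (h : u ≤ v) :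
    Fin.castSucc u ≠ Fin.succ v := by
  intro hh
  have hv := congrArg Fin.val hh
  simp only [Fin.coe_castSucc, Fin.val_succ] at hv
  have := Fin.le_def.mp h
  omega

/-- `D` is the pole coface map `δ_k : dk_{m,n} → dk_{m+1,n}`, `0 ≤ k ≤ m`
(1-indexed `k`; `k = 0` is extension on the left). -/
def IsDeltaPole (m n : ℕ) (k : ℕ) (D : dkmn m n →ₗ⁅ℚ⁆ dkmn (m + 1) n) : Prop :=
  (∀ (i : Fin m) (j : Fin n),
     (((i : ℕ) + 1 < k) → D (aG i j) = aG (Fin.castSucc i) j) ∧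
     (((i : ℕ) + 1 = k) → D (aG i j) = aG (Fin.castSucc i) j + aG (Fin.succ i) j) ∧
     ((k < (i : ℕ) + 1) → D (aG i j) = aG (Fin.succ i) j)) ∧
  (∀ (u v : Fin n) (h : u ≠ v), D (cG u v h) = cG u v h)

/-- `D` is the strand coface map `δ_{m+κ} : dk_{m,n} → dk_{m,n+1}`, `1 ≤ κ ≤ n+1`
(1-indexed strand `κ`; `κ = n+1` is extension on the right). -/
def IsDeltaStrand (m n : ℕ) (κ : ℕ) (D : dkmn m n →ₗ⁅ℚ⁆ dkmn m (n + 1)) : Prop :=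
  (∀ (i : Fin m) (j : Fin n),
     (((j : ℕ) + 1 < κ) → D (aG i j) = aG i (Fin.castSucc j)) ∧
     (((j : ℕ) + 1 = κ) → D (aG i j) = aG i (Fin.castSucc j) + aG i (Fin.succ j)) ∧
     ((κ < (j : ℕ) + 1) → D (aG i j) = aG i (Fin.succ j))) ∧
  (∀ (u v : Fin n) (h : u < v),
     (((v : ℕ) + 1 < κ) →
        D (cG u v h.ne) = cG (Fin.castSucc u) (Fin.castSucc v) (castSucc_ne_of_ne h.ne)) ∧
     (((v : ℕ) + 1 = κ) →
        D (cG u v h.ne) = cG (Fin.castSucc u) (Fin.castSucc v) (castSucc_ne_of_ne h.ne)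
          + cG (Fin.castSucc u) (Fin.succ v) (castSucc_ne_succ_of_le h.le)) ∧
     (((u : ℕ) + 1 < κ ∧ κ < (v : ℕ) + 1) →
        D (cG u v h.ne) = cG (Fin.castSucc u) (Fin.succ v) (castSucc_ne_succ_of_le h.le)) ∧
     (((u : ℕ) + 1 = κ) →
        D (cG u v h.ne) = cG (Fin.castSucc u) (Fin.succ v) (castSucc_ne_succ_of_le h.le)
          + cG (Fin.succ u) (Fin.succ v) (succ_ne_of_ne h.ne)) ∧
     ((κ < (u : ℕ) + 1) →
        D (cG u v h.ne) = cG (Fin.succ u) (Fin.succ v) (succ_ne_of_ne h.ne)))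

/-- `T` is `ϑ_{m+1} : dk_{m+1,n} → dk_{m,n+1}` (the last pole becomes the first strand). -/
def IsTheta (m n : ℕ) (T : dkmn (m + 1) n →ₗ⁅ℚ⁆ dkmn m (n + 1)) : Prop :=
  (∀ (i : Fin (m + 1)) (j : Fin n),
     (∀ hi : (i : ℕ) < m, T (aG i j) = aG ⟨i, hi⟩ (Fin.succ j)) ∧
     ((i : ℕ) = m → T (aG i j) = cG 0 (Fin.succ j) (Fin.succ_ne_zero j).symm)) ∧
  (∀ (u v : Fin n) (h : u ≠ v), T (cG u v h) = cG (Fin.succ u) (Fin.succ v) (succ_ne_of_ne h))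

/-- The coface map `d_k : dk_{m,n} → dk_{m,n+1}`, built from the data of the pole
cofaces, the strand cofaces, and `ϑ_{m+1}`. -/
def coface (m n : ℕ) (Dp : ℕ → (dkmn m n →ₗ⁅ℚ⁆ dkmn (m + 1) n))
    (Ds : ℕ → (dkmn m n →ₗ⁅ℚ⁆ dkmn m (n + 1)))
    (T : dkmn (m + 1) n →ₗ⁅ℚ⁆ dkmn m (n + 1)) (k : ℕ) :
    dkmn m n →ₗ⁅ℚ⁆ dkmn m (n + 1) :=
  if k ≤ m then T.comp (Dp k) else Ds (k - m)

/-- The algebra map `ass_{m'+1} → ass_{m'}` with `x_p ↦ x_p` (`p < m'`) and `x_{m'} ↦ 0`. -/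
def setLast0A (m' : ℕ) : Ass (m' + 1) →ₐ[ℚ] Ass m' :=
  FreeAlgebra.lift ℚ fun p : Fin (m' + 1) =>
    if h : (p : ℕ) < m' then gen ⟨p, h⟩ else 0

/-- The Lie algebra map `FreeLie (Fin (m'+1)) → FreeLie (Fin m')` setting the last
generator to `0`. -/
def flSetLast0 (m' : ℕ) : FreeLieAlgebra ℚ (Fin (m' + 1)) →ₗ⁅ℚ⁆ FreeLieAlgebra ℚ (Fin m') :=
  FreeLieAlgebra.lift ℚ fun p : Fin (m' + 1) =>
    if h : (p : ℕ) < m' then FreeLieAlgebra.of ℚ ⟨p, h⟩ else 0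


-- ===== auxiliary lemmas =====
section Aux

lemma wordProd_nil {N : ℕ} : wordProd ([] : List (Fin N)) = 1 := rfl

lemma wordProd_cons {N : ℕ} (a : Fin N) (l : List (Fin N)) :
    wordProd (a :: l) = gen a * wordProd l := by simp [wordProd]

lemma wordProd_append {N : ℕ} (l l' : List (Fin N)) :
    wordProd (l ++ l') = wordProd l * wordProd l' := by simp [wordProd]

lemma equiv_wordProd {N : ℕ} (l : List (Fin N)) :
    FreeAlgebra.equivMonoidAlgebraFreeMonoid (R := ℚ) (X := Fin N) (wordProd l)
      = MonoidAlgebra.single (FreeMonoid.ofList l) 1 := by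
  induction l with
  | nil =>
      rw [wordProd_nil, map_one, MonoidAlgebra.one_def]
      rfl
  | cons a t ih =>
      rw [wordProd_cons, map_mul, ih]
      have h1 : FreeAlgebra.equivMonoidAlgebraFreeMonoid (R := ℚ) (X := Fin N) (gen a)
          = MonoidAlgebra.single (FreeMonoid.of a) 1 := by
        simp [gen, FreeAlgebra.equivMonoidAlgebraFreeMonoid, MonoidAlgebra.of_apply]
      rw [h1, MonoidAlgebra.single_mul_single, one_mul]
      rfl

lemma basisFreeMonoid_apply {N : ℕ} (w : FreeMonoid (Fin N)) :
    FreeAlgebra.basisFreeMonoid ℚ (Fin N) w = wordProd w.toList := by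
  rw [FreeAlgebra.basisFreeMonoid, Module.Basis.map_apply]
  have h : (Finsupp.basisSingleOne : Module.Basis (FreeMonoid (Fin N)) ℚ _) w
      = Finsupp.single w 1 := by
    rw [Finsupp.coe_basisSingleOne]
  rw [h]
  show (FreeAlgebra.equivMonoidAlgebraFreeMonoid (R := ℚ) (X := Fin N)).symm _ = _
  rw [AlgEquiv.symm_apply_eq, equiv_wordProd, FreeMonoid.ofList_toList]
  rfl

lemma liftWord_wordProd {N : ℕ} {A : Type} [AddCommGroup A] [Module ℚ A]
    (f : List (Fin N) → A) (l : List (Fin N)) :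
    liftWord f (wordProd l) = f l := by
  have h := Module.Basis.constr_basis (FreeAlgebra.basisFreeMonoid ℚ (Fin N)) ℚ
    (fun w => f w.toList) (FreeMonoid.ofList l)
  rw [basisFreeMonoid_apply, FreeMonoid.toList_ofList] at h
  exact h

lemma ass_induction {N : ℕ} {P : Ass N → Prop}
    (hw : ∀ l : List (Fin N), P (wordProd l))
    (hz : P 0) (ha : ∀ a b, P a → P b → P (a + b))
    (hs : ∀ (q : ℚ) (a), P a → P (q • a)) (z : Ass N) : P z := by
  have hz' : z ∈ (⊤ : Submodule ℚ (Ass N)) := trivial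
  rw [← (FreeAlgebra.basisFreeMonoid ℚ (Fin N)).span_eq] at hz'
  refine Submodule.span_induction ?_ hz (fun a b _ _ => ha a b) (fun q a _ => hs q a) hz'
  rintro x ⟨w, rfl⟩
  rw [basisFreeMonoid_apply]
  exact hw _

end Aux
section Aux2

/-- The counit. -/
def epsA (N : ℕ) : Ass N →ₐ[ℚ] ℚ := FreeAlgebra.lift ℚ (fun _ => (0 : ℚ))

lemma epsA_gen {N : ℕ} (p : Fin N) : epsA N (gen p) = 0 := by
  simp [epsA, gen]

lemma epsA_wordProd {N : ℕ} (l : List (Fin N)) :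
    epsA N (wordProd l) = if l = [] then 1 else 0 := by
  cases l with
  | nil => simp [wordProd_nil]
  | cons a t => rw [wordProd_cons, map_mul, epsA_gen]; simp

lemma partialD_wordProd {N : ℕ} (i : Fin N) (l : List (Fin N)) :
    partialD i (wordProd l) =
      match l.getLast? with
      | some a => if a = i then wordProd l.dropLast else 0
      | none => 0 := by
  rw [partialD, liftWord_wordProd]

lemma partialD_gen {N : ℕ} (i p : Fin N) :
    partialD i (gen p) = if p = i then 1 else 0 := by
  have : gen p = wordProd [p] := by rw [wordProd_cons, wordProd_nil, mul_one]
  rw [this, partialD_wordProd]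
  rfl

lemma partialD_one {N : ℕ} (i : Fin N) : partialD i (1 : Ass N) = 0 := by
  have : (1 : Ass N) = wordProd [] := rfl
  rw [this, partialD_wordProd]
  rfl

lemma assLinearMap_ext {N : ℕ} {A : Type} [AddCommGroup A] [Module ℚ A]
    {f g : Ass N →ₗ[ℚ] A} (h : ∀ l, f (wordProd l) = g (wordProd l)) : f = g :=
  Module.Basis.ext (FreeAlgebra.basisFreeMonoid ℚ (Fin N))
    (fun w => by rw [basisFreeMonoid_apply]; exact h _)

lemma partialD_mul {N : ℕ} (i : Fin N) (a b : Ass N) :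
    partialD i (a * b) = a * partialD i b + epsA N b • partialD i a := by
  induction b using ass_induction with
  | hw l' =>
      induction a using ass_induction with
      | hw l =>
          rw [← wordProd_append, epsA_wordProd, partialD_wordProd, partialD_wordProd,
            partialD_wordProd]
          cases hl' : l' with
          | nil =>
              simp only [List.append_nil, if_pos rfl, one_smul]
              cases l.getLast? <;> simp
          | cons b t =>
              have hne : (b :: t : List (Fin N)) ≠ [] := by simp
              rw [List.getLast?_append_of_ne_nil l hne,
                List.dropLast_append_of_ne_nil (l' := l) hne]
              simp only [if_neg hne, zero_smul, add_zero]
              cases h : (b :: t : List (Fin N)).getLast? with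
              | none => simp at h
              | some c =>
                  by_cases hc : c = i
                  · simp only [if_pos hc, wordProd_append]
                  · simp [if_neg hc]
      | hz => simp
      | ha a a' h1 h2 => rw [add_mul, map_add, h1, h2, map_add, add_mul, smul_add]; abel
      | hs q a h1 => rw [smul_mul_assoc, map_smul, h1, map_smul, smul_add, smul_mul_assoc, smul_comm]
  | hz => simp
  | ha b b' h1 h2 =>
      rw [mul_add, map_add, h1, h2, map_add, mul_add, map_add, add_smul]
      abel
  | hs q b h1 =>
      rw [mul_smul_comm, map_smul, h1, map_smul, map_smul, smul_add, mul_smul_comm, smul_smul,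
        smul_eq_mul]

end Aux2
section Aux3

lemma freeLie_mem_span {X : Type} (U : FreeLieAlgebra ℚ X) :
    U ∈ LieSubalgebra.lieSpan ℚ (FreeLieAlgebra ℚ X)
      (Set.range (FreeLieAlgebra.of ℚ (X := X))) := by
  set S := LieSubalgebra.lieSpan ℚ (FreeLieAlgebra ℚ X)
      (Set.range (FreeLieAlgebra.of ℚ (X := X))) with hS
  let g : FreeLieAlgebra ℚ X →ₗ⁅ℚ⁆ S := FreeLieAlgebra.lift ℚ
    (fun x => ⟨FreeLieAlgebra.of ℚ x, LieSubalgebra.subset_lieSpan ⟨x, rfl⟩⟩)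
  have h : S.incl.comp g = LieHom.id := by
    apply FreeLieAlgebra.hom_ext
    intro x
    simp [g, FreeLieAlgebra.lift_of_apply]
  have h2 : S.incl (g U) = U := by
    have := LieHom.congr_fun h U
    simpa using this
  rw [← h2]
  exact (g U).2

lemma freeLie_induction {X : Type} {P : FreeLieAlgebra ℚ X → Prop}
    (mem : ∀ x, P (FreeLieAlgebra.of ℚ x)) (zero : P 0)
    (smul : ∀ (q : ℚ) (U), P U → P (q • U))
    (add : ∀ U V, P U → P V → P (U + V))
    (lie : ∀ U V, P U → P V → P ⁅U, V⁆) (U : FreeLieAlgebra ℚ X) : P U := by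
  let S : LieSubalgebra ℚ (FreeLieAlgebra ℚ X) :=
    { carrier := P
      add_mem' := fun {a b} => add a b
      zero_mem' := zero
      smul_mem' := fun q {x} h => smul q x h
      lie_mem' := fun {a b} => lie a b }
  have h : LieSubalgebra.lieSpan ℚ (FreeLieAlgebra ℚ X)
      (Set.range (FreeLieAlgebra.of ℚ (X := X))) ≤ S := by
    rw [LieSubalgebra.lieSpan_le]
    rintro x ⟨y, rfl⟩
    exact mem y
  exact h (freeLie_mem_span U)

lemma toAssL_of {m : ℕ} (p : Fin m) : toAssL m (FreeLieAlgebra.of ℚ p) = gen p := by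
  simp [toAssL, FreeLieAlgebra.lift_of_apply, gen]

lemma epsA_toAssL {m : ℕ} (U : FreeLieAlgebra ℚ (Fin m)) : epsA m (toAssL m U) = 0 := by
  have h : ((epsA m).toLieHom.comp (toAssL m)) = (0 : FreeLieAlgebra ℚ (Fin m) →ₗ⁅ℚ⁆ ℚ) := by
    apply FreeLieAlgebra.hom_ext
    intro x
    simp [LieHom.comp_apply, toAssL_of, epsA_gen]
  exact LieHom.congr_fun h U

lemma setLast0A_gen {m' : ℕ} (p : Fin (m' + 1)) :
    setLast0A m' (gen p) = if h : (p : ℕ) < m' then gen ⟨p, h⟩ else 0 := by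
  simp [setLast0A, gen]

lemma setLast0A_toAssL {m' : ℕ} (U : FreeLieAlgebra ℚ (Fin (m' + 1))) :
    setLast0A m' (toAssL (m' + 1) U) = toAssL m' (flSetLast0 m' U) := by
  have h : ((setLast0A m').toLieHom.comp (toAssL (m' + 1)))
      = (toAssL m').comp (flSetLast0 m') := by
    apply FreeLieAlgebra.hom_ext
    intro x
    simp only [LieHom.comp_apply, toAssL_of, AlgHom.toLieHom_apply, setLast0A_gen,
      flSetLast0, FreeLieAlgebra.lift_of_apply]
    by_cases hx : (x : ℕ) < m'
    · rw [dif_pos hx, dif_pos hx, toAssL_of]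
    · rw [dif_neg hx, dif_neg hx, map_zero]
  exact LieHom.congr_fun h U

lemma partialD_toAssL_lie {m : ℕ} (i : Fin m) (U V : FreeLieAlgebra ℚ (Fin m)) :
    partialD i (toAssL m ⁅U, V⁆)
      = toAssL m U * partialD i (toAssL m V) - toAssL m V * partialD i (toAssL m U) := by
  rw [LieHom.map_lie, Ring.lie_def, map_sub, partialD_mul, partialD_mul,
    epsA_toAssL, epsA_toAssL, zero_smul, zero_smul, add_zero, add_zero]

end Aux3
section Aux4

lemma eprojF_bracket {m n : ℕ} (x y : dkmn m n) :
    eprojF m n ⁅x, y⁆ = ⁅eprojF m n x, eprojF m n y⁆ := rfl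

lemma eproj_eq_eprojF {m n : ℕ} (x : dkmn m n) : eproj m n x = eprojF m n x := rfl

lemma wEl_wordProd {m n : ℕ} (u v : Fin n) (h : u ≠ v) (l : List (Fin m)) :
    wEl u v h (wordProd l) = adWApply v l (cGE u v h) := liftWord_wordProd _ _

/-- Iterated bracketing at the `dk` level. -/
def adWdk {m n : ℕ} (j : Fin n) : List (Fin m) → dkmn m n → dkmn m n
  | [], ξ => ξ
  | p :: t, ξ => ⁅aG p j, adWdk j t ξ⁆

lemma eprojF_adWdk {m n : ℕ} (j : Fin n) (l : List (Fin m)) (ξ : dkmn m n) :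
    eprojF m n (adWdk j l ξ) = adWApply j l (eprojF m n ξ) := by
  induction l with
  | nil => rfl
  | cons p t ih => rw [adWdk, eprojF_bracket, ih]; rfl

lemma adWdk_mem_cId {m n : ℕ} (j : Fin n) (l : List (Fin m)) {ξ : dkmn m n}
    (hξ : ξ ∈ cId m n) : adWdk j l ξ ∈ cId m n := by
  induction l with
  | nil => exact hξ
  | cons p t ih => exact (cId m n).lie_mem ih

lemma cG_mem_cId {m n : ℕ} (u v : Fin n) (h : u ≠ v) : cG u v h ∈ cId m n :=
  LieSubmodule.subset_lieSpan ⟨u, v, h, rfl⟩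

lemma wEl_mem {m n : ℕ} (u v : Fin n) (h : u ≠ v) (w : Ass m) :
    wEl u v h w ∈ Submodule.map (eproj m n) (cId m n).toSubmodule := by
  induction w using ass_induction with
  | hw l =>
      rw [wEl_wordProd]
      refine ⟨adWdk v l (cG u v h), adWdk_mem_cId v l (cG_mem_cId u v h), ?_⟩
      rw [eproj_eq_eprojF, eprojF_adWdk]
      rfl
  | hz => rw [map_zero]; exact Submodule.zero_mem _
  | ha a b h1 h2 => rw [map_add]; exact Submodule.add_mem _ h1 h2
  | hs q a h1 => rw [map_smul]; exact Submodule.smul_mem _ _ h1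

lemma cGE_mem {m n : ℕ} (u v : Fin n) (h : u ≠ v) :
    cGE u v h ∈ Submodule.map (eproj m n) (cId m n).toSubmodule :=
  ⟨cG u v h, cG_mem_cId u v h, rfl⟩

lemma brack_vanish {m n : ℕ} {x y : edk m n}
    (hx : x ∈ Submodule.map (eproj m n) (cId m n).toSubmodule)
    (hy : y ∈ Submodule.map (eproj m n) (cId m n).toSubmodule) : ⁅x, y⁆ = 0 := by
  obtain ⟨a, ha, rfl⟩ := hx
  obtain ⟨b, hb, rfl⟩ := hy
  rw [eproj_eq_eprojF, eproj_eq_eprojF, ← eprojF_bracket]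
  exact (LieSubmodule.Quotient.mk_eq_zero' (N := ccId m n)).mpr
    (LieSubmodule.lie_mem_lie ha hb)

lemma uEl_of {m n : ℕ} (j : Fin n) (p : Fin m) :
    uEl j (FreeLieAlgebra.of ℚ p) = aGE p j := FreeLieAlgebra.lift_of_apply _ _

lemma aGE_brack_wEl {m n : ℕ} (p : Fin m) (u v : Fin n) (h : u ≠ v) (w : Ass m) :
    ⁅aGE p v, wEl u v h w⁆ = wEl u v h (gen p * w) := by
  induction w using ass_induction with
  | hw l =>
      rw [wEl_wordProd, ← wordProd_cons, wEl_wordProd]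
      rfl
  | hz => rw [map_zero, lie_zero, mul_zero, map_zero]
  | ha a b h1 h2 => rw [map_add, lie_add, h1, h2, mul_add, map_add]
  | hs q a h1 => rw [map_smul, lie_smul, h1, mul_smul_comm, map_smul]

lemma uEl_brack_wEl {m n : ℕ} (u v : Fin n) (h : u ≠ v) (a : FreeLieAlgebra ℚ (Fin m)) :
    ∀ w : Ass m, ⁅uEl v a, wEl u v h w⁆ = wEl u v h (toAssL m a * w) := by
  induction a using freeLie_induction with
  | mem p =>
      intro w
      rw [uEl_of, toAssL_of, aGE_brack_wEl]
  | zero =>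
      intro w
      rw [map_zero, map_zero, zero_lie, zero_mul, map_zero]
  | smul q a h1 =>
      intro w
      rw [map_smul, map_smul, smul_lie, h1, smul_mul_assoc, map_smul]
  | add a b h1 h2 =>
      intro w
      rw [map_add, map_add, add_lie, h1, h2, add_mul, map_add]
  | lie a b h1 h2 =>
      intro w
      rw [LieHom.map_lie, LieHom.map_lie, lie_lie, h1, h2, h1, h2, Ring.lie_def, sub_mul,
        map_sub, mul_assoc, mul_assoc]

end Aux4
section Aux5

lemma theta_cc {m' n : ℕ} (T : dkmn (m' + 1) n →ₗ⁅ℚ⁆ dkmn m' (n + 1))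
    (hT : IsTheta m' n T) : ∀ z ∈ ccId (m' + 1) n, T z ∈ ccId m' (n + 1) := by
  have hmap : LieIdeal.map T (cId (m' + 1) n) ≤ cId m' (n + 1) := by
    rw [LieIdeal.map_le_iff_le_comap]
    rw [cId, LieSubmodule.lieSpan_le]
    rintro z ⟨u, v, huv, rfl⟩
    rw [SetLike.mem_coe, LieIdeal.mem_comap, hT.2 u v huv]
    exact cG_mem_cId _ _ _
  intro z hz
  have h1 : T z ∈ LieIdeal.map T (ccId (m' + 1) n) := LieIdeal.mem_map hz
  have h2 : LieIdeal.map T (ccId (m' + 1) n) ≤ ccId m' (n + 1) := by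
    refine le_trans (LieIdeal.map_bracket_le T) ?_
    exact LieSubmodule.mono_lie hmap hmap
  exact h2 h1

/-- The induced map on `edk`. -/
def TeHom {m' n : ℕ} (T : dkmn (m' + 1) n →ₗ⁅ℚ⁆ dkmn m' (n + 1))
    (hker : ∀ z ∈ ccId (m' + 1) n, T z ∈ ccId m' (n + 1)) :
    edk (m' + 1) n →ₗ⁅ℚ⁆ edk m' (n + 1) :=
  { toLinearMap := Submodule.liftQ (ccId (m' + 1) n).toSubmodule
      ((eproj m' (n + 1)).comp T.toLinearMap)
      (fun z hz => by
        simp only [LinearMap.mem_ker, LinearMap.comp_apply, eproj]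
        exact (Submodule.Quotient.mk_eq_zero _).mpr (hker z hz))
    map_lie' := by
      intro x y
      obtain ⟨a, rfl⟩ := LieSubmodule.Quotient.surjective_mk' (ccId (m' + 1) n) x
      obtain ⟨b, rfl⟩ := LieSubmodule.Quotient.surjective_mk' (ccId (m' + 1) n) y
      show Submodule.liftQ _ _ _ ⁅eprojF (m' + 1) n a, eprojF (m' + 1) n b⁆ = _
      rw [← eprojF_bracket]
      show Submodule.liftQ _ _ _ (Submodule.Quotient.mk _) = _
      rw [Submodule.liftQ_apply]
      show eproj m' (n + 1) (T ⁅a, b⁆) = _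
      rw [LieHom.map_lie, eproj_eq_eprojF, eprojF_bracket]
      rfl }

lemma TeHom_mk {m' n : ℕ} (T : dkmn (m' + 1) n →ₗ⁅ℚ⁆ dkmn m' (n + 1))
    (hker : ∀ z ∈ ccId (m' + 1) n, T z ∈ ccId m' (n + 1)) (z : dkmn (m' + 1) n) :
    TeHom T hker (eprojF (m' + 1) n z) = eprojF m' (n + 1) (T z) := by
  show Submodule.liftQ _ _ _ (Submodule.Quotient.mk _) = _
  rw [Submodule.liftQ_apply]
  rfl

end Aux5
section Aux6

lemma Te_wEl {m' n : ℕ} (T : dkmn (m' + 1) n →ₗ⁅ℚ⁆ dkmn m' (n + 1))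
    (hT : IsTheta m' n T) (hker : ∀ z ∈ ccId (m' + 1) n, T z ∈ ccId m' (n + 1))
    (u v : Fin n) (h : u ≠ v) (w : Ass (m' + 1)) :
    TeHom T hker (wEl u v h w)
      = wEl (Fin.succ u) (Fin.succ v) (succ_ne_of_ne h) (setLast0A m' w) := by
  induction w using ass_induction with
  | hw l =>
      induction l with
      | nil =>
          rw [wEl_wordProd]
          show TeHom T hker (eprojF _ _ (cG u v h)) = _
          rw [TeHom_mk, hT.2 u v h]
          have h1 : setLast0A m' (wordProd ([] : List (Fin (m' + 1))))
              = wordProd ([] : List (Fin m')) := by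
            rw [wordProd_nil, wordProd_nil, map_one]
          rw [h1, wEl_wordProd]
          rfl
      | cons p t ih =>
          rw [wordProd_cons, ← aGE_brack_wEl, LieHom.map_lie, ih]
          have hTa : TeHom T hker (aGE p v) = eprojF m' (n + 1) (T (aG p v)) :=
            TeHom_mk T hker _
          rw [map_mul, setLast0A_gen]
          by_cases hp : (p : ℕ) < m'
          · rw [hTa, ((hT.1 p v).1) hp, dif_pos hp]
            exact aGE_brack_wEl _ _ _ _ _
          · have hp' : (p : ℕ) = m' := by
              have := p.isLt; omega
            rw [hTa, ((hT.1 p v).2) hp', dif_neg hp, zero_mul, map_zero]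
            exact brack_vanish (cGE_mem _ _ _) (wEl_mem _ _ _ _)
  | hz => simp only [map_zero, map_zero]
  | ha a b h1 h2 => simp only [map_add, map_add, h1, h2]
  | hs q a h1 => simp only [map_smul, map_smul, h1]

lemma Te_uEl {m' n : ℕ} (T : dkmn (m' + 1) n →ₗ⁅ℚ⁆ dkmn m' (n + 1))
    (hT : IsTheta m' n T) (hker : ∀ z ∈ ccId (m' + 1) n, T z ∈ ccId m' (n + 1))
    (i : Fin n) (U : FreeLieAlgebra ℚ (Fin (m' + 1))) :
    TeHom T hker (uEl i U) = uEl (Fin.succ i) (flSetLast0 m' U) +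
      wEl 0 (Fin.succ i) (Fin.succ_ne_zero i).symm
        (setLast0A m' (partialD (Fin.last m') (toAssL (m' + 1) U))) := by
  induction U using freeLie_induction with
  | mem p =>
      rw [uEl_of, toAssL_of, partialD_gen]
      have hTa : TeHom T hker (aGE p i) = eprojF m' (n + 1) (T (aG p i)) := TeHom_mk T hker _
      rw [flSetLast0, FreeLieAlgebra.lift_of_apply]
      by_cases hp : (p : ℕ) < m'
      · have hpl : p ≠ Fin.last m' := by
          intro e
          rw [e, Fin.val_last] at hp
          omega
        rw [hTa, ((hT.1 p i).1) hp, if_neg hpl, map_zero, map_zero, add_zero, dif_pos hp,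
          uEl_of]
        rfl
      · have hp' : (p : ℕ) = m' := by
          have := p.isLt; omega
        have hpl : p = Fin.last m' := Fin.ext (by rw [hp', Fin.val_last])
        rw [hTa, ((hT.1 p i).2) hp', if_pos hpl, map_one, dif_neg hp, map_zero,
          zero_add]
        have h1 : (1 : Ass m') = wordProd [] := rfl
        rw [h1, wEl_wordProd]
        rfl
  | zero =>
      simp only [map_zero, map_zero, zero_add]
  | smul q U h1 =>
      simp only [map_smul, map_smul, h1, smul_add]
  | add U V h1 h2 =>
      simp only [map_add, map_add, h1, h2]
      abel
  | lie U V h1 h2 =>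
      rw [LieHom.map_lie, LieHom.map_lie, h1, h2, LieHom.map_lie]
      set j := Fin.succ i with hj
      set hne := (Fin.succ_ne_zero i).symm
      set σU := flSetLast0 m' U
      set σV := flSetLast0 m' V
      set δU := setLast0A m' (partialD (Fin.last m') (toAssL (m' + 1) U)) with hdU
      set δV := setLast0A m' (partialD (Fin.last m') (toAssL (m' + 1) V)) with hdV
      have hBB : ⁅wEl 0 j hne δU, wEl 0 j hne δV⁆ = 0 :=
        brack_vanish (wEl_mem _ _ _ _) (wEl_mem _ _ _ _)
      have hAA : ⁅uEl j σU, uEl j σV⁆ = uEl j ⁅σU, σV⁆ := (LieHom.map_lie _ _ _).symm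
      have hAB : ⁅uEl j σU, wEl 0 j hne δV⁆ = wEl 0 j hne (toAssL m' σU * δV) :=
        uEl_brack_wEl 0 j hne σU δV
      have hBA : ⁅wEl 0 j hne δU, uEl j σV⁆ = -(wEl 0 j hne (toAssL m' σV * δU)) := by
        rw [← lie_skew, uEl_brack_wEl 0 j hne σV δU]
      have hD : setLast0A m' (partialD (Fin.last m') (toAssL (m' + 1) ⁅U, V⁆))
          = toAssL m' σU * δV - toAssL m' σV * δU := by
        rw [partialD_toAssL_lie, map_sub, map_mul, map_mul, setLast0A_toAssL,
          setLast0A_toAssL, hdU, hdV]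
      rw [lie_add, add_lie, add_lie, hBB, hAA, hAB, hBA, hD, map_sub]
      abel

end Aux6

/-- `ϑ_m` preserves `[c,c]` and the induced map on `edk` is
given by the stated formulas. -/
theorem statement11 (m' n : ℕ)
    (T : dkmn (m' + 1) n →ₗ⁅ℚ⁆ dkmn m' (n + 1)) (hT : IsTheta m' n T) :
    (∀ z ∈ ccId (m' + 1) n, T z ∈ ccId m' (n + 1)) ∧
    ∃ Te : edk (m' + 1) n →ₗ⁅ℚ⁆ edk m' (n + 1),
      (∀ z, Te (eprojF (m' + 1) n z) = eprojF m' (n + 1) (T z)) ∧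
      (∀ (U : FreeLieAlgebra ℚ (Fin (m' + 1))) (i : Fin n),
        Te (uEl i U) = uEl (Fin.succ i) (flSetLast0 m' U) +
          wEl 0 (Fin.succ i) (Fin.succ_ne_zero i).symm
            (setLast0A m' (partialD (Fin.last m') (toAssL (m' + 1) U)))) ∧
      (∀ (w : Ass (m' + 1)) (u v : Fin n) (h : u ≠ v),
        Te (wEl u v h w) =
          wEl (Fin.succ u) (Fin.succ v) (succ_ne_of_ne h) (setLast0A m' w)) := by
  have hker := theta_cc T hT
  exact ⟨hker, TeHom T hker, fun z => TeHom_mk T hker z, fun U i => Te_uEl T hT hker i U,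
    fun w u v h => Te_wEl T hT hker u v h w⟩

end
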